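/- Let k ≥ 2 and let P : Fin k → ℝ be a probability vector with P i > 0 for all i and ∑ i, P i = 1. Let A(P) be the k×k real symmetric matrix with A(P)_ii = (1/(k−1)) · ∑_{j ≠ i} (P j − P i)/(P i + P j) and A(P)_ij = −2√(P i · P j)/((k−1)(P i + P j)) for i ≠ j. Then A(P) · v(P) = −v(P), where v(P)_i = √(P i); that is, v(P) is an eigenvector of the warm-started fully-connected XY-mixer with eigenvalue −1. -/

import Mathlib

open Matrix Finset

/-- For `k ≥ 2` and a positive probability vector `P`, the
warm-started fully-connected XY-mixer matrix `A(P)`, with diagonal entries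
`A i i = (1/(k-1)) ∑_{j ≠ i} (P j - P i)/(P i + P j)` and off-diagonal entries
`A i j = -2 √(P i · P j)/((k-1)(P i + P j))`, has `v(P)` (with `v(P) i = √(P i)`)
as an eigenvector with eigenvalue `-1`: `A(P) · v(P) = -v(P)`. -/
theorem statement1 (k : ℕ) (hk : 2 ≤ k) (P : Fin k → ℝ)
    (hpos : ∀ i, 0 < P i) (hsum : ∑ i, P i = 1)
    (A : Matrix (Fin k) (Fin k) ℝ)
    (hA : ∀ i j, A i j =
      if i = j then
        (1 / ((k : ℝ) - 1)) * ∑ l ∈ Finset.univ.erase i, (P l - P i) / (P i + P l)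
      else
        -2 * Real.sqrt (P i * P j) / (((k : ℝ) - 1) * (P i + P j)))
    (v : Fin k → ℝ) (hv : ∀ i, v i = Real.sqrt (P i)) :
    A.mulVec v = -v := by
  have hk2 : (2:ℝ) ≤ (k:ℝ) := by exact_mod_cast hk
  have hk1 : (k:ℝ) - 1 ≠ 0 := by linarith
  funext i
  simp only [Matrix.mulVec, dotProduct, Pi.neg_apply]
  rw [← Finset.add_sum_erase _ _ (Finset.mem_univ i)]
  have hoff : ∀ j ∈ Finset.univ.erase i, A i j * v j =
      Real.sqrt (P i) / ((k:ℝ) - 1) * (-2 * P j / (P i + P j)) := by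
    intro j hj
    have hij : i ≠ j := (Finset.ne_of_mem_erase hj).symm
    have hpj : (0:ℝ) < P i + P j := by have := hpos i; have := hpos j; linarith
    have hsq : Real.sqrt (P j) * Real.sqrt (P j) = P j := Real.mul_self_sqrt (hpos j).le
    rw [hA, if_neg hij, hv, Real.sqrt_mul (hpos i).le, ← hsq]
    field_simp
    rw [Real.sqrt_sq (Real.sqrt_nonneg _)]
  rw [Finset.sum_congr rfl hoff, ← Finset.mul_sum, hA, if_pos rfl, hv]
  have hcomb : (1 / ((k:ℝ) - 1)) * (∑ l ∈ Finset.univ.erase i, (P l - P i) / (P i + P l)) *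
        Real.sqrt (P i) + Real.sqrt (P i) / ((k:ℝ) - 1) *
        (∑ j ∈ Finset.univ.erase i, -2 * P j / (P i + P j)) =
      Real.sqrt (P i) / ((k:ℝ) - 1) *
        (∑ j ∈ Finset.univ.erase i, ((P j - P i) / (P i + P j) + -2 * P j / (P i + P j))) := by
    rw [Finset.sum_add_distrib]
    ring
  rw [hcomb]
  have hone : ∀ j ∈ Finset.univ.erase i,
      (P j - P i) / (P i + P j) + -2 * P j / (P i + P j) = -1 := by
    intro j _
    have hpj : (0:ℝ) < P i + P j := by have := hpos i; have := hpos j; linarith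
    field_simp
    ring
  rw [Finset.sum_congr rfl hone, Finset.sum_const, Finset.card_erase_of_mem (Finset.mem_univ i),
    Finset.card_univ, Fintype.card_fin]
  have hck : ((k - 1 : ℕ) : ℝ) = (k:ℝ) - 1 := by
    have : 1 ≤ k := by omega
    push_cast [this]; ring
  rw [nsmul_eq_mul, hck]
  field_simp
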